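/- Let l ≥ 1 be an integer, ε_h ∈ (0,1/2] and 0 < λ < 1. Then for all θ, θ' ∈ ℝ^d, (1 + λ|θ'|^{(l+1)/ε_h})^{ε_h} − (1 + λ|θ|^{(l+1)/ε_h})^{ε_h} ≤ √2 · λ^{ε_h} (l+1)(1 + |θ| + |θ'|)^l |θ − θ'|. -/

import Mathlib

open Real

/-- Concavity shift inequality: for `0 ≤ ε ≤ 1` and `0 ≤ u ≤ v`,
`(1+v)^ε + u^ε ≤ (1+u)^ε + v^ε`. -/
lemma rpow_shift_ineq {eps u v : ℝ} (heps0 : 0 ≤ eps) (heps1 : eps ≤ 1)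
    (hu : 0 ≤ u) (huv : u ≤ v) :
    (1 + v) ^ eps + u ^ eps ≤ (1 + u) ^ eps + v ^ eps := by
  have hconc := Real.concaveOn_rpow heps0 heps1
  have hD : (0:ℝ) < v + 1 - u := by linarith
  set a : ℝ := (v - u) / (v + 1 - u) with ha
  set b : ℝ := 1 / (v + 1 - u) with hb
  have ha0 : 0 ≤ a := div_nonneg (by linarith) hD.le
  have hb0 : 0 ≤ b := by positivity
  have hab : a + b = 1 := by
    rw [ha, hb, ← add_div, div_eq_one_iff_eq hD.ne']; ring
  have hba : b + a = 1 := by linarith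
  have humem : u ∈ Set.Ici (0:ℝ) := hu
  have hvmem : v + 1 ∈ Set.Ici (0:ℝ) := Set.mem_Ici.mpr (by linarith)
  have h1 := hconc.2 humem hvmem ha0 hb0 hab
  have h2 := hconc.2 humem hvmem hb0 ha0 hba
  have e1 : a • u + b • (v + 1) = u + 1 := by
    simp only [smul_eq_mul, ha, hb]; field_simp; ring
  have e2 : b • u + a • (v + 1) = v := by
    simp only [smul_eq_mul, ha, hb]; field_simp; ring
  rw [e1] at h1
  rw [e2] at h2
  simp only [smul_eq_mul] at h1 h2
  have hcomb : u ^ eps + (v + 1) ^ eps ≤ (u + 1) ^ eps + v ^ eps := by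
    calc u ^ eps + (v + 1) ^ eps
        = (a + b) * u ^ eps + (b + a) * (v + 1) ^ eps := by rw [hab, hba]; ring
      _ = (a * u ^ eps + b * (v + 1) ^ eps) + (b * u ^ eps + a * (v + 1) ^ eps) := by ring
      _ ≤ (u + 1) ^ eps + v ^ eps := add_le_add h1 h2
  have h1u : (1:ℝ) + u = u + 1 := by ring
  have h1v : (1:ℝ) + v = v + 1 := by ring
  rw [h1u, h1v]
  linarith

/-- `y^(n+1) - x^(n+1) ≤ (n+1) * y^n * (y - x)` for `0 ≤ x ≤ y`. -/
lemma pow_succ_sub_le (x y : ℝ) (hx : 0 ≤ x) (hxy : x ≤ y) (n : ℕ) :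
    y ^ (n + 1) - x ^ (n + 1) ≤ (n + 1 : ℝ) * y ^ n * (y - x) := by
  induction n with
  | zero => simp
  | succ n ih =>
      have hy : 0 ≤ y := hx.trans hxy
      have hxn : x ^ (n+1) ≤ y ^ (n+1) := pow_le_pow_left₀ hx hxy _
      have hyn : 0 ≤ y ^ n := pow_nonneg hy n
      push_cast
      calc y ^ (n + 1 + 1) - x ^ (n + 1 + 1)
          = y * (y ^ (n+1) - x ^ (n+1)) + x ^ (n+1) * (y - x) := by ring
        _ ≤ y * ((↑n + 1) * y ^ n * (y - x)) + y ^ (n+1) * (y - x) :=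
            add_le_add (mul_le_mul_of_nonneg_left ih hy)
              (mul_le_mul_of_nonneg_right hxn (sub_nonneg.mpr hxy))
        _ = (↑n + 1 + 1) * y ^ (n + 1) * (y - x) := by ring

/-- Main scalar estimate: for `0 ≤ x ≤ y`,
`(1 + λ y^p)^ε - (1 + λ x^p)^ε ≤ λ^ε (l+1) y^l (y - x)` where `p = (l+1)/ε`. -/
lemma taming_scalar_est (l : ℕ) (eps lam x y : ℝ)
    (heps0 : 0 < eps) (heps1 : eps ≤ 1 / 2) (hlam0 : 0 < lam)
    (hx : 0 ≤ x) (hxy : x ≤ y) :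
    (1 + lam * y ^ (((l : ℝ) + 1) / eps)) ^ eps -
      (1 + lam * x ^ (((l : ℝ) + 1) / eps)) ^ eps ≤
    lam ^ eps * ((l : ℝ) + 1) * y ^ l * (y - x) := by
  set p : ℝ := ((l : ℝ) + 1) / eps with hp
  have hy : 0 ≤ y := hx.trans hxy
  have heps1' : eps ≤ 1 := by linarith
  have hxp : 0 ≤ x ^ p := Real.rpow_nonneg hx p
  have hxyp : x ^ p ≤ y ^ p := by
    apply Real.rpow_le_rpow hx hxy
    positivity
  -- shift inequality with u = lam * x^p, v = lam * y^p
  have hshift := rpow_shift_ineq heps0.le heps1'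
    (mul_nonneg hlam0.le hxp) (mul_le_mul_of_nonneg_left hxyp hlam0.le)
  -- (lam * y^p)^eps = lam^eps * y^(l+1)
  have hpow : ∀ z : ℝ, 0 ≤ z → (lam * z ^ p) ^ eps = lam ^ eps * z ^ (l + 1) := by
    intro z hz
    rw [Real.mul_rpow hlam0.le (Real.rpow_nonneg hz p), ← Real.rpow_natCast z (l+1),
      ← Real.rpow_mul hz]
    congr 2
    push_cast
    rw [hp]
    field_simp
  have step1 : (1 + lam * y ^ p) ^ eps - (1 + lam * x ^ p) ^ eps ≤
      lam ^ eps * y ^ (l+1) - lam ^ eps * x ^ (l+1) := by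
    have := hshift
    rw [hpow x hx, hpow y hy] at this
    linarith
  have step2 : y ^ (l+1) - x ^ (l+1) ≤ ((l:ℝ) + 1) * y ^ l * (y - x) :=
    pow_succ_sub_le x y hx hxy l
  have hlp : 0 ≤ lam ^ eps := Real.rpow_nonneg hlam0.le eps
  calc (1 + lam * y ^ p) ^ eps - (1 + lam * x ^ p) ^ eps
      ≤ lam ^ eps * (y ^ (l+1) - x ^ (l+1)) := by rw [mul_sub]; exact step1
    _ ≤ lam ^ eps * (((l:ℝ) + 1) * y ^ l * (y - x)) :=
        mul_le_mul_of_nonneg_left step2 hlp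
    _ = lam ^ eps * ((l : ℝ) + 1) * y ^ l * (y - x) := by ring

/-- Lipschitz-type estimate for the taming denominator
`θ ↦ (1 + λ|θ|^{(l+1)/ε_h})^{ε_h}`. -/
theorem taming_denominator_lipschitz
    {d : ℕ} (hd : 0 < d)
    (l : ℕ) (hl : 1 ≤ l) (eps lam : ℝ)
    (heps0 : 0 < eps) (heps1 : eps ≤ 1 / 2) (hlam0 : 0 < lam) (hlam1 : lam < 1) :
    ∀ θ θ' : EuclideanSpace ℝ (Fin d),
      (1 + lam * ‖θ'‖ ^ (((l : ℝ) + 1) / eps)) ^ eps -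
          (1 + lam * ‖θ‖ ^ (((l : ℝ) + 1) / eps)) ^ eps ≤
        Real.sqrt 2 * lam ^ eps * ((l : ℝ) + 1) * (1 + ‖θ‖ + ‖θ'‖) ^ l * ‖θ - θ'‖ := by
  intro θ θ'
  have hθ : (0:ℝ) ≤ ‖θ‖ := norm_nonneg _
  have hθ' : (0:ℝ) ≤ ‖θ'‖ := norm_nonneg _
  have hlp : 0 ≤ lam ^ eps := Real.rpow_nonneg hlam0.le eps
  have hsqrt : (1:ℝ) ≤ Real.sqrt 2 := by
    rw [show (1:ℝ) = Real.sqrt 1 by simp]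
    exact Real.sqrt_le_sqrt (by norm_num)
  have hbase : (0:ℝ) ≤ 1 + ‖θ‖ + ‖θ'‖ := by linarith
  have hbpow : (0:ℝ) ≤ (1 + ‖θ‖ + ‖θ'‖) ^ l := pow_nonneg hbase l
  have hRHS0 : 0 ≤ Real.sqrt 2 * lam ^ eps * ((l : ℝ) + 1) * (1 + ‖θ‖ + ‖θ'‖) ^ l * ‖θ - θ'‖ := by
    have : (0:ℝ) ≤ Real.sqrt 2 := Real.sqrt_nonneg 2
    positivity
  rcases le_or_gt ‖θ'‖ ‖θ‖ with hle | hlt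
  · -- LHS ≤ 0
    have hmono : (1 + lam * ‖θ'‖ ^ (((l : ℝ) + 1) / eps)) ^ eps ≤
        (1 + lam * ‖θ‖ ^ (((l : ℝ) + 1) / eps)) ^ eps := by
      apply Real.rpow_le_rpow (by positivity) _ heps0.le
      have : ‖θ'‖ ^ (((l : ℝ) + 1) / eps) ≤ ‖θ‖ ^ (((l : ℝ) + 1) / eps) := by
        apply Real.rpow_le_rpow hθ' hle
        positivity
      nlinarith
    linarith
  · have key := taming_scalar_est l eps lam ‖θ‖ ‖θ'‖ heps0 heps1 hlam0 hθ hlt.le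
    have hnorm : ‖θ'‖ - ‖θ‖ ≤ ‖θ - θ'‖ := by
      have := norm_sub_norm_le θ' θ
      rw [norm_sub_rev] at this
      linarith
    have hylel : ‖θ'‖ ^ l ≤ (1 + ‖θ‖ + ‖θ'‖) ^ l :=
      pow_le_pow_left₀ hθ' (by linarith) l
    have hcoeff : 0 ≤ lam ^ eps * ((l : ℝ) + 1) := by positivity
    calc (1 + lam * ‖θ'‖ ^ (((l : ℝ) + 1) / eps)) ^ eps -
          (1 + lam * ‖θ‖ ^ (((l : ℝ) + 1) / eps)) ^ eps
        ≤ lam ^ eps * ((l : ℝ) + 1) * ‖θ'‖ ^ l * (‖θ'‖ - ‖θ‖) := key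
      _ ≤ lam ^ eps * ((l : ℝ) + 1) * (1 + ‖θ‖ + ‖θ'‖) ^ l * ‖θ - θ'‖ := by
          apply mul_le_mul
          · exact mul_le_mul_of_nonneg_left hylel hcoeff
          · exact hnorm
          · linarith
          · positivity
      _ ≤ Real.sqrt 2 * lam ^ eps * ((l : ℝ) + 1) * (1 + ‖θ‖ + ‖θ'‖) ^ l * ‖θ - θ'‖ := by
          have h0 : (0:ℝ) ≤ lam ^ eps * ((l : ℝ) + 1) * (1 + ‖θ‖ + ‖θ'‖) ^ l * ‖θ - θ'‖ := by
            positivity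
          nlinarith [hsqrt, h0]
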